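/- Define φ(z) = 2(e^z − 1 − z)/z² for z ≠ 0 and φ(0) = 1. Then for fixed x < 0, the function t ↦ φ(x·t) is strictly decreasing on t ∈ (0, ∞). -/

import Mathlib

noncomputable def φ (z : ℝ) : ℝ :=
  if z = 0 then 1 else 2 * (Real.exp z - 1 - z) / z ^ 2

-- (z-1)e^z + 1 > 0 for z < 0
lemma aux_h_pos {z : ℝ} (hz : z < 0) : 0 < (z - 1) * Real.exp z + 1 := by
  have h1 : 1 - z < Real.exp (-z) := by
    have := Real.add_one_lt_exp (x := -z) (by linarith)
    linarith
  have hpos : (0:ℝ) < 1 - z := by linarith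
  have h3 : (1 - z) * Real.exp z < 1 := by
    have := mul_lt_mul_of_pos_right h1 (Real.exp_pos z)
    rwa [← Real.exp_add, neg_add_cancel, Real.exp_zero] at this
  nlinarith [Real.exp_pos z]

-- g(z) = (z-2)e^z + z + 2 < 0 for z < 0
lemma aux_g_neg {z : ℝ} (hz : z < 0) : (z - 2) * Real.exp z + z + 2 < 0 := by
  set g : ℝ → ℝ := fun z => (z - 2) * Real.exp z + z + 2 with hg
  have hderiv : ∀ y : ℝ, HasDerivAt g ((y - 1) * Real.exp y + 1) y := by
    intro y
    have h1 : HasDerivAt (fun y : ℝ => (y - 2) * Real.exp y)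
        (1 * Real.exp y + (y - 2) * Real.exp y) y :=
      ((hasDerivAt_id y).sub_const 2).mul (Real.hasDerivAt_exp y)
    have h2 : HasDerivAt g ((1 * Real.exp y + (y - 2) * Real.exp y) + 1) y := by
      rw [hg]
      exact (h1.add (hasDerivAt_id' y)).add_const 2
    convert h2 using 1
    ring
  have hmono : StrictMonoOn g (Set.Iic 0) := by
    apply strictMonoOn_of_deriv_pos (convex_Iic 0)
    · exact (Continuous.continuousOn (by continuity))
    · intro y hy
      rw [interior_Iic] at hy
      rw [(hderiv y).deriv]
      exact aux_h_pos hy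
  have : g z < g 0 := hmono (Set.mem_Iic.mpr hz.le) Set.self_mem_Iic hz
  simpa [hg, Real.exp_zero] using this

lemma phi_mono : StrictMonoOn φ (Set.Iio 0) := by
  set f : ℝ → ℝ := fun z => 2 * (Real.exp z - 1 - z) / z ^ 2 with hf
  have hderiv : ∀ z : ℝ, z ≠ 0 → HasDerivAt f
      ((2 * (Real.exp z - 1) * z ^ 2 - 2 * (Real.exp z - 1 - z) * (2 * z)) / (z ^ 2) ^ 2) z := by
    intro z hz
    have hnum : HasDerivAt (fun z : ℝ => 2 * (Real.exp z - 1 - z)) (2 * (Real.exp z - 1)) z := by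
      have : HasDerivAt (fun z : ℝ => Real.exp z - 1 - z) (Real.exp z - 1) z := by
        have := ((Real.hasDerivAt_exp z).sub_const 1).sub (hasDerivAt_id z)
        exact this
      simpa [mul_sub] using this.const_mul 2
    have hden : HasDerivAt (fun z : ℝ => z ^ 2) (2 * z) z := by
      simpa using hasDerivAt_pow 2 z
    exact hnum.div hden (pow_ne_zero 2 hz)
  have hmono : StrictMonoOn f (Set.Iio 0) := by
    apply strictMonoOn_of_deriv_pos (convex_Iio 0)
    · apply ContinuousOn.div
      · exact (Continuous.continuousOn (by continuity))
      · exact (Continuous.continuousOn (by continuity))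
      · intro z hz; exact pow_ne_zero 2 (ne_of_lt hz)
    · intro z hz
      rw [interior_Iio] at hz
      have hz' : z < 0 := hz
      have hzne : z ≠ 0 := ne_of_lt hz
      rw [(hderiv z hzne).deriv]
      have hnum : 2 * (Real.exp z - 1) * z ^ 2 - 2 * (Real.exp z - 1 - z) * (2 * z)
          = 2 * z * ((z - 2) * Real.exp z + z + 2) := by ring
      rw [hnum]
      apply div_pos
      · exact mul_pos_of_neg_of_neg (by linarith) (aux_g_neg hz)
      · positivity
  intro a ha b hb hab
  have ha' : a ≠ 0 := ne_of_lt ha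
  have hb' : b ≠ 0 := ne_of_lt hb
  simpa [φ, ha', hb'] using hmono ha hb hab

theorem phi_strictAnti (x : ℝ) (hx : x < 0) :
    StrictAntiOn (fun t : ℝ => φ (x * t)) (Set.Ioi 0) := by
  intro t1 ht1 t2 ht2 h
  have h1 : x * t1 ∈ Set.Iio 0 := mul_neg_of_neg_of_pos hx ht1
  have h2 : x * t2 ∈ Set.Iio 0 := mul_neg_of_neg_of_pos hx ht2
  exact phi_mono h2 h1 (by nlinarith)
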